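/- Let δ_d(t) = (1/(1+t))·(1 − 1/(1+t))^t if 1 + t ≤ d^α and δ_d(t) = d^{−α}(1 − d^{−α})^t if 1 + t ≥ d^α, and let I_d(t) = ∫_1^d k^{−α}(1 − k^{−α})^t dk. Then: (i) if 0 < α < 1, for every τ > 0, δ_d(τ·d^α)/I_d(τ·d^α) → 0 as d → ∞; (ii) if α = 1, for every τ ∈ (0, 1], δ_d(d^τ)/I_d(d^τ) → 0 as d → ∞; (iii) if α > 1, the iterated limit lim_{t→∞} lim_{d→∞} δ_d(t)/I_d(t) equals 0 (where t ranges over nonnegative integers and the inner limit exists). -/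

import Mathlib

open Filter MeasureTheory

section Aux

open Real Set

lemma expLB {x s : ℝ} (hx0 : 0 ≤ x) (hx : x ≤ 1/2) (hs : 0 ≤ s) :
    Real.exp (-(2*s*x)) ≤ (1-x)^s := by
  have key : 1 ≤ (1-x) * Real.exp (2*x) := by
    nlinarith [Real.add_one_le_exp (2*x), Real.exp_pos (2*x)]
  have h1 : Real.exp (-(2*x)) ≤ 1 - x := by
    rw [← mul_le_mul_iff_of_pos_right (Real.exp_pos (2*x)), ← Real.exp_add]
    simpa using key
  calc Real.exp (-(2*s*x)) = Real.exp (-(2*x)) ^ s := by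
        rw [← Real.exp_mul]; ring_nf
    _ ≤ (1-x)^s := Real.rpow_le_rpow (Real.exp_pos _).le h1 hs

lemma fCont (α t : ℝ) (ht : 0 ≤ t) :
    ContinuousOn (fun k : ℝ => k ^ (-α) * (1 - k ^ (-α)) ^ t) (Ici 1) := by
  have h1 : ContinuousOn (fun k : ℝ => k ^ (-α)) (Ici (1:ℝ)) :=
    continuousOn_id.rpow_const fun x hx => Or.inl (by simp only [mem_Ici] at hx; positivity)
  exact h1.mul ((continuousOn_const.sub h1).rpow_const fun x hx => Or.inr ht)

lemma fNonneg {α t k : ℝ} (hα : 0 ≤ α) (hk : 1 ≤ k) (ht : 0 ≤ t) :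
    0 ≤ k ^ (-α) * (1 - k ^ (-α)) ^ t := by
  have h1 : k ^ (-α) ≤ 1 := Real.rpow_le_one_of_one_le_of_nonpos hk (by linarith)
  exact mul_nonneg (Real.rpow_nonneg (by linarith) _) (Real.rpow_nonneg (by linarith) _)

lemma intLB {α t a b d : ℝ} (hα : 0 ≤ α) (ht : 0 ≤ t) (ha : 1 ≤ a) (hab : a ≤ b) (hbd : b ≤ d) :
    (b - a) * (b ^ (-α) * (1 - a ^ (-α)) ^ t) ≤
      ∫ k in (1:ℝ)..d, k ^ (-α) * (1 - k ^ (-α)) ^ t := by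
  have hd : (1:ℝ) ≤ d := le_trans (le_trans ha hab) hbd
  have hb : (1:ℝ) ≤ b := le_trans ha hab
  have hint : ∀ u v : ℝ, 1 ≤ u → u ≤ v → v ≤ d →
      IntervalIntegrable (fun k : ℝ => k ^ (-α) * (1 - k ^ (-α)) ^ t) MeasureTheory.volume u v :=
    fun u v hu huv _ => ((fCont α t ht).mono (by
      rw [Set.uIcc_of_le huv]
      exact fun x hx => le_trans hu hx.1)).intervalIntegrable
  have step1 : ∫ k in a..b, k ^ (-α) * (1 - k ^ (-α)) ^ t ≤
      ∫ k in (1:ℝ)..d, k ^ (-α) * (1 - k ^ (-α)) ^ t := by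
    refine intervalIntegral.integral_mono_interval ha hab hbd ?_ (hint 1 d le_rfl hd le_rfl)
    filter_upwards [MeasureTheory.ae_restrict_mem measurableSet_Ioc] with x hx
    exact fNonneg hα hx.1.le ht
  refine le_trans ?_ step1
  have step2 : ∫ k in a..b, (b ^ (-α) * (1 - a ^ (-α)) ^ t) ≤
      ∫ k in a..b, k ^ (-α) * (1 - k ^ (-α)) ^ t := by
    refine intervalIntegral.integral_mono_on hab
      intervalIntegrable_const (hint a b ha hab hbd) fun x hx => ?_
    have hx1 : (1:ℝ) ≤ x := le_trans ha hx.1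
    have h1 : b ^ (-α) ≤ x ^ (-α) :=
      Real.rpow_le_rpow_of_nonpos (by linarith) hx.2 (by linarith)
    have h2 : (1 - a ^ (-α)) ^ t ≤ (1 - x ^ (-α)) ^ t := by
      refine Real.rpow_le_rpow ?_ (by
        have := Real.rpow_le_rpow_of_nonpos (by linarith : (0:ℝ) < a) hx.1 (by linarith : -α ≤ 0)
        linarith) ht
      have : a ^ (-α) ≤ 1 := Real.rpow_le_one_of_one_le_of_nonpos ha (by linarith)
      linarith
    exact mul_le_mul h1 h2 (Real.rpow_nonneg (by
      have : a ^ (-α) ≤ 1 := Real.rpow_le_one_of_one_le_of_nonpos ha (by linarith)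
      linarith) t) (Real.rpow_nonneg (by linarith) _)
  rw [intervalIntegral.integral_const, smul_eq_mul] at step2
  exact le_trans (le_of_eq (by ring)) step2

lemma I_lb {α t D : ℝ} (hα : 0 < α) (ht : 0 ≤ t) (hD : 2 ≤ D) (hhalf : (D/2)^(-α) ≤ 1/2) :
    (D/2) * (D ^ (-α) * Real.exp (-(2*t*((D/2) ^ (-α))))) ≤
      ∫ k in (1:ℝ)..D, k ^ (-α) * (1 - k ^ (-α)) ^ t := by
  have h := intLB (α := α) (t := t) (a := D/2) (b := D) (d := D) hα.le ht
    (by linarith) (by linarith) le_rfl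
  refine le_trans ?_ h
  have hexp := expLB (Real.rpow_nonneg (by linarith : (0:ℝ) ≤ D/2) (-α)) hhalf ht
  have h0 : (0:ℝ) ≤ D ^ (-α) := Real.rpow_nonneg (by linarith) _
  calc (D/2) * (D ^ (-α) * Real.exp (-(2*t*((D/2) ^ (-α)))))
      ≤ (D/2) * (D ^ (-α) * (1 - (D/2) ^ (-α)) ^ t) := by
        refine mul_le_mul_of_nonneg_left (mul_le_mul_of_nonneg_left hexp h0) (by linarith)
    _ = (D - D/2) * (D ^ (-α) * (1 - (D/2) ^ (-α)) ^ t) := by ring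

lemma fIntOn {α : ℝ} (hα : 1 < α) {t : ℝ} (ht : 0 ≤ t) :
    IntegrableOn (fun k : ℝ => k ^ (-α) * (1 - k ^ (-α)) ^ t) (Set.Ioi 1) := by
  have hg : IntegrableOn (fun k : ℝ => k ^ (-α)) (Set.Ioi (1:ℝ)) :=
    integrableOn_Ioi_rpow_of_lt (by linarith) one_pos
  refine MeasureTheory.Integrable.mono hg
    ((by measurability : Measurable fun k : ℝ => k ^ (-α) * (1 - k ^ (-α)) ^ t).aestronglyMeasurable) ?_
  filter_upwards [ae_restrict_mem measurableSet_Ioi] with x hx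
  have hx1 : (1:ℝ) ≤ x := hx.le
  have hxnn : (0:ℝ) ≤ x := le_trans zero_le_one hx1
  have h1 : x ^ (-α) ≤ 1 := Real.rpow_le_one_of_one_le_of_nonpos hx1 (by linarith)
  have h2 : (1 - x ^ (-α)) ^ t ≤ 1 :=
    Real.rpow_le_one (by linarith [Real.rpow_nonneg hxnn (-α)]) (by linarith [Real.rpow_nonneg hxnn (-α)]) ht
  rw [Real.norm_eq_abs, Real.norm_eq_abs, abs_of_nonneg (by positivity : (0:ℝ) ≤ x ^ (-α)),
    abs_of_nonneg (fNonneg (by linarith : (0:ℝ) ≤ α) hx1 ht)]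
  nlinarith [Real.rpow_nonneg hxnn (-α),
    Real.rpow_nonneg (by linarith [Real.rpow_nonneg hxnn (-α)] : (0:ℝ) ≤ 1 - x ^ (-α)) t]

end Aux

/-- The sum–integral approximation error `δ_d(t)` is negligible relative to the
integral `I_d(t)` under the appropriate time scalings:
(i) `t = τ·d^α` for `α < 1`; (ii) `t = d^τ`, `τ ∈ (0,1]`, for `α = 1`;
(iii) for `α > 1`, the iterated limit `lim_{t→∞} lim_{d→∞} δ_d(t)/I_d(t) = 0`. -/
theorem stmt7 (α : ℝ) (hα : 0 < α) :
    let δ : ℕ → ℝ → ℝ := fun d t =>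
      if 1 + t ≤ (d : ℝ) ^ α
        then (1 / (1 + t)) * (1 - 1 / (1 + t)) ^ t
        else (d : ℝ) ^ (-α) * (1 - (d : ℝ) ^ (-α)) ^ t
    let I : ℕ → ℝ → ℝ := fun d t =>
      ∫ k in (1 : ℝ)..(d : ℝ), k ^ (-α) * (1 - k ^ (-α)) ^ t
    (α < 1 → ∀ τ : ℝ, 0 < τ →
      Tendsto (fun d : ℕ => δ d (τ * (d : ℝ) ^ α) / I d (τ * (d : ℝ) ^ α))
        atTop (nhds 0)) ∧
    (α = 1 → ∀ τ : ℝ, 0 < τ → τ ≤ 1 →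
      Tendsto (fun d : ℕ => δ d ((d : ℝ) ^ τ) / I d ((d : ℝ) ^ τ))
        atTop (nhds 0)) ∧
    (1 < α → ∃ L : ℕ → ℝ,
      (∀ t : ℕ, Tendsto (fun d : ℕ => δ d t / I d t) atTop (nhds (L t))) ∧
      Tendsto L atTop (nhds 0)) := by
  intro δ I
  -- general bounds on δ
  have hδ_ub : ∀ (d : ℕ) (t : ℝ), 0 ≤ t → 1 ≤ (d:ℝ) →
      δ d t ≤ max (1/(1+t)) ((d:ℝ) ^ (-α)) := by
    intro d t ht hd
    simp only [δ]
    split_ifs with h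
    · refine le_trans ?_ (le_max_left _ _)
      have hb : 0 ≤ 1 - 1/(1+t) := by
        have : 1/(1+t) ≤ 1 := by
          rw [div_le_one (by linarith)]; linarith
        linarith
      have h2 : (1 - 1/(1+t)) ^ t ≤ 1 := Real.rpow_le_one hb (by
        have : 0 ≤ 1/(1+t) := by positivity
        linarith) ht
      have h3 : (0:ℝ) ≤ 1/(1+t) := by positivity
      nlinarith [Real.rpow_nonneg hb t]
    · refine le_trans ?_ (le_max_right _ _)
      have hdn : (0:ℝ) ≤ (d:ℝ) := by linarith
      have h3 : (0:ℝ) ≤ (d:ℝ) ^ (-α) := Real.rpow_nonneg hdn _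
      have h1 : (d:ℝ) ^ (-α) ≤ 1 := Real.rpow_le_one_of_one_le_of_nonpos hd (by linarith)
      have h2 : (1 - (d:ℝ) ^ (-α)) ^ t ≤ 1 := Real.rpow_le_one (by linarith) (by linarith) ht
      nlinarith [Real.rpow_nonneg (by linarith : (0:ℝ) ≤ 1 - (d:ℝ) ^ (-α)) t]
  have hδ_nn : ∀ (d : ℕ) (t : ℝ), 0 ≤ t → 1 ≤ (d:ℝ) → 0 ≤ δ d t := by
    intro d t ht hd
    simp only [δ]
    split_ifs with h
    · refine mul_nonneg (by positivity) (Real.rpow_nonneg ?_ _)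
      have : 1/(1+t) ≤ 1 := by rw [div_le_one (by linarith)]; linarith
      linarith
    · refine mul_nonneg (Real.rpow_nonneg (by linarith) _) (Real.rpow_nonneg ?_ _)
      have : (d:ℝ) ^ (-α) ≤ 1 := Real.rpow_le_one_of_one_le_of_nonpos hd (by linarith)
      linarith
  refine ⟨?_, ?_, ?_⟩
  · -- case α < 1
    intro hα1 τ hτ
    have hDiv : Tendsto (fun d : ℕ => ((d:ℝ)/2)) atTop atTop :=
      tendsto_natCast_atTop_atTop.atTop_div_const two_pos
    have hhalf0 : Tendsto (fun d : ℕ => ((d:ℝ)/2) ^ (-α)) atTop (nhds 0) :=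
      (tendsto_rpow_neg_atTop hα).comp hDiv
    set K := max (1/τ) 1 with hK
    set e := Real.exp (-(2*τ*2^α)) with he
    have hepos : 0 < e := Real.exp_pos _
    have hub : ∀ᶠ d : ℕ in atTop,
        δ d (τ * (d:ℝ)^α) / I d (τ * (d:ℝ)^α) ≤ (2*K/e) / (d:ℝ) ∧
        0 ≤ δ d (τ * (d:ℝ)^α) / I d (τ * (d:ℝ)^α) := by
      filter_upwards [tendsto_natCast_atTop_atTop.eventually_ge_atTop (2:ℝ),
        hhalf0.eventually (eventually_le_nhds (by norm_num : (0:ℝ) < 1/2))] with d hd2 hdh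
      set D := (d:ℝ) with hD
      have hD0 : (0:ℝ) < D := by linarith
      have hD1 : (1:ℝ) ≤ D := by linarith
      set t := τ * D^α with htdef
      have hDα : (0:ℝ) < D^α := Real.rpow_pos_of_pos hD0 _
      have hDα' : (0:ℝ) < D^(-α) := Real.rpow_pos_of_pos hD0 _
      have htpos : 0 < t := by positivity
      have harg : 2*t*((D/2) ^ (-α)) = 2*τ*2^α := by
        rw [htdef, Real.div_rpow hD0.le (by norm_num : (0:ℝ) ≤ 2),
          Real.rpow_neg hD0.le, Real.rpow_neg (by norm_num : (0:ℝ) ≤ 2)]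
        have h2α : (0:ℝ) < (2:ℝ)^α := Real.rpow_pos_of_pos two_pos _
        field_simp
      have hI := I_lb hα htpos.le hd2 hdh
      rw [harg] at hI
      have hIposlb : 0 < (D/2) * (D ^ (-α) * e) := by positivity
      have hIpos : 0 < I d t := lt_of_lt_of_le hIposlb hI
      have hδub : δ d t ≤ K * D^(-α) := by
        refine le_trans (hδ_ub d t htpos.le hD1) (max_le ?_ ?_)
        · have h1 : 1/(1+t) ≤ 1/t := one_div_le_one_div_of_le htpos (by linarith)
          have h2 : 1/t = (1/τ) * D^(-α) := by
            rw [Real.rpow_neg hD0.le, htdef]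
            field_simp
          refine le_trans h1 (le_trans (le_of_eq h2) ?_)
          exact mul_le_mul_of_nonneg_right (le_max_left _ _) hDα'.le
        · exact le_mul_of_one_le_left hDα'.le (le_max_right _ _)
      constructor
      · have heq : (K*D^(-α))/((D/2)*(D^(-α)*e)) = (2*K/e)/D := by
          field_simp
        rw [← heq]
        exact div_le_div₀ (by positivity) hδub hIposlb hI
      · exact div_nonneg (hδ_nn d t htpos.le hD1) hIpos.le
    refine tendsto_of_tendsto_of_tendsto_of_le_of_le' tendsto_const_nhds
      (tendsto_const_nhds.div_atTop tendsto_natCast_atTop_atTop)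
      (hub.mono fun d h => h.2) (hub.mono fun d h => h.1)
  · -- case α = 1
    intro hα1 τ hτ0 hτ1
    subst hα1
    have hub : ∀ᶠ d : ℕ in atTop,
        δ d ((d:ℝ)^τ) / I d ((d:ℝ)^τ) ≤ (2*Real.exp 4) * (d:ℝ)^(-τ) ∧
        0 ≤ δ d ((d:ℝ)^τ) / I d ((d:ℝ)^τ) := by
      filter_upwards [tendsto_natCast_atTop_atTop.eventually_ge_atTop (4:ℝ)] with d hd4
      set D := (d:ℝ) with hD
      have hD0 : (0:ℝ) < D := by linarith
      have hD1 : (1:ℝ) ≤ D := by linarith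
      have hd2 : (2:ℝ) ≤ D := by linarith
      set t := D^τ with htdef
      have htpos : 0 < t := Real.rpow_pos_of_pos hD0 _
      have hhalfeq : (D/2)^(-(1:ℝ)) = 2/D := by rw [Real.rpow_neg_one, inv_div]
      have hhalfle : (D/2)^(-(1:ℝ)) ≤ 1/2 := by
        rw [hhalfeq, div_le_div_iff₀ hD0 two_pos]; linarith
      have hI := I_lb one_pos htpos.le hd2 hhalfle
      have htleD : t ≤ D := by
        rw [htdef]
        calc D^τ ≤ D^(1:ℝ) := Real.rpow_le_rpow_of_exponent_le hD1 hτ1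
          _ = D := Real.rpow_one D
      have hexpmono : Real.exp (-4) ≤ Real.exp (-(2*t*((D/2) ^ (-(1:ℝ))))) := by
        rw [hhalfeq]
        apply Real.exp_le_exp.mpr
        rw [neg_le_neg_iff, show 2*t*(2/D) = 4*t/D by ring, div_le_iff₀ hD0]
        linarith
      have hD1' : D^(-(1:ℝ)) = D⁻¹ := Real.rpow_neg_one D
      have hIlb : Real.exp (-4)/2 ≤ I d t := by
        refine le_trans ?_ hI
        have h1 : Real.exp (-4)/2 = (D/2)*(D⁻¹*Real.exp (-4)) := by
          field_simp
        rw [h1, hD1']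
        exact mul_le_mul_of_nonneg_left
          (mul_le_mul_of_nonneg_left hexpmono (by positivity)) (by linarith)
      have hIpos : 0 < I d t := lt_of_lt_of_le (by positivity) hIlb
      have hδub : δ d t ≤ D^(-τ) := by
        refine le_trans (hδ_ub d t htpos.le hD1) (max_le ?_ ?_)
        · have h1 : 1/(1+t) ≤ 1/t := one_div_le_one_div_of_le htpos (by linarith)
          refine le_trans h1 (le_of_eq ?_)
          rw [Real.rpow_neg hD0.le, htdef, one_div]
        · exact Real.rpow_le_rpow_of_exponent_le hD1 (by linarith)
      constructor
      · calc δ d t / I d t ≤ D^(-τ) / (Real.exp (-4)/2) :=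
              div_le_div₀ (Real.rpow_nonneg hD0.le _) hδub (by positivity) hIlb
          _ = (2*Real.exp 4) * D^(-τ) := by
              rw [Real.exp_neg]
              field_simp
      · exact div_nonneg (hδ_nn d t htpos.le hD1) hIpos.le
    have hT : Tendsto (fun d : ℕ => (2*Real.exp 4) * (d:ℝ)^(-τ)) atTop (nhds 0) := by
      have := ((tendsto_rpow_neg_atTop hτ0).comp tendsto_natCast_atTop_atTop).const_mul
        (2*Real.exp 4)
      simpa using this
    refine tendsto_of_tendsto_of_tendsto_of_le_of_le' tendsto_const_nhds hT
      (hub.mono fun d h => h.2) (hub.mono fun d h => h.1)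
  · -- case α > 1
    intro hα1
    set c : ℕ → ℝ := fun t => (1/(1+(t:ℝ))) * (1 - 1/(1+(t:ℝ))) ^ (t:ℝ) with hc
    set C : ℕ → ℝ := fun t => ∫ k in Set.Ioi (1:ℝ), k ^ (-α) * (1 - k ^ (-α)) ^ (t:ℝ) with hCdef
    set a : ℕ → ℝ := fun t => (1+(t:ℝ))^(α⁻¹) with hadef
    have h1t : ∀ t : ℕ, (1:ℝ) ≤ 1+(t:ℝ) := fun t => by
      have := Nat.cast_nonneg (α := ℝ) t; linarith
    have ha1 : ∀ t : ℕ, 1 ≤ a t := by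
      intro t
      simp only [hadef]
      exact Real.one_le_rpow (h1t t) (by positivity)
    have hat : ∀ t : ℕ, (a t)^(-α) = 1/(1+(t:ℝ)) := by
      intro t
      rw [hadef]
      rw [← Real.rpow_mul (by linarith [h1t t] : (0:ℝ) ≤ 1+(t:ℝ))]
      rw [show α⁻¹ * (-α) = -1 by field_simp]
      rw [Real.rpow_neg_one, one_div]
    have hbase_nn : ∀ t : ℕ, (0:ℝ) ≤ 1 - 1/(1+(t:ℝ)) := by
      intro t
      have h2 : 1/(1+(t:ℝ)) ≤ 1 := by
        rw [div_le_one (by linarith [h1t t])]; linarith [h1t t]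
      linarith
    have hbpow_pos : ∀ t : ℕ, (0:ℝ) < (1 - 1/(1+(t:ℝ))) ^ (t:ℝ) := by
      intro t
      cases t with
      | zero => simp
      | succ n =>
        apply Real.rpow_pos_of_pos
        have hn : (0:ℝ) ≤ (n:ℝ) := Nat.cast_nonneg n
        have : ((n+1 : ℕ) : ℝ) = (n:ℝ) + 1 := by push_cast; ring
        rw [this]
        have h2 : 1/(1+((n:ℝ)+1)) < 1 := by
          rw [div_lt_one (by positivity)]; linarith
        linarith
    have hBle : ∀ t : ℕ, a t * ((2 * a t)^(-α) * (1 - 1/(1+(t:ℝ))) ^ (t:ℝ)) ≤ C t := by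
      intro t
      have h1 := intLB (α := α) (t := (t:ℝ)) (a := a t) (b := 2 * a t) (d := 2 * a t)
        hα.le (Nat.cast_nonneg t) (ha1 t) (by linarith [ha1 t]) le_rfl
      rw [hat t] at h1
      have h2 : ∫ k in (1:ℝ)..(2 * a t), k ^ (-α) * (1 - k ^ (-α)) ^ (t:ℝ) ≤ C t := by
        rw [intervalIntegral.integral_of_le (by linarith [ha1 t] : (1:ℝ) ≤ 2 * a t), hCdef]
        refine MeasureTheory.setIntegral_mono_set (fIntOn hα1 (Nat.cast_nonneg t)) ?_ ?_
        · filter_upwards [MeasureTheory.ae_restrict_mem measurableSet_Ioi] with x hx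
          exact fNonneg hα.le hx.le (Nat.cast_nonneg t)
        · exact HasSubset.Subset.eventuallyLE Set.Ioc_subset_Ioi_self
      refine le_trans (le_trans (le_of_eq (by ring)) h1) h2
    have hBpos : ∀ t : ℕ, 0 < a t * ((2 * a t)^(-α) * (1 - 1/(1+(t:ℝ))) ^ (t:ℝ)) := by
      intro t
      have h1 : 0 < a t := lt_of_lt_of_le one_pos (ha1 t)
      have h2 : 0 < (2 * a t)^(-α) := Real.rpow_pos_of_pos (by linarith) _
      exact mul_pos h1 (mul_pos h2 (hbpow_pos t))
    have hCpos : ∀ t : ℕ, 0 < C t := fun t => lt_of_lt_of_le (hBpos t) (hBle t)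
    have hcnn : ∀ t : ℕ, 0 ≤ c t := fun t =>
      mul_nonneg (by positivity) (Real.rpow_nonneg (hbase_nn t) _)
    refine ⟨fun t => c t / C t, fun t => ?_, ?_⟩
    · -- inner limit
      have hIt : Tendsto (fun d : ℕ => I d (t:ℝ)) atTop (nhds (C t)) := by
        simp only [I, hCdef]
        exact MeasureTheory.intervalIntegral_tendsto_integral_Ioi 1
          (fIntOn hα1 (Nat.cast_nonneg t)) tendsto_natCast_atTop_atTop
      have hev : ∀ᶠ d : ℕ in atTop, δ d (t:ℝ) = c t := by
        have h3 : Tendsto (fun d : ℕ => ((d:ℝ))^α) atTop atTop :=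
          (tendsto_rpow_atTop hα).comp tendsto_natCast_atTop_atTop
        filter_upwards [h3.eventually_ge_atTop (1+(t:ℝ))] with d hd
        simp only [δ]
        rw [if_pos hd]
      refine Tendsto.congr' ?_ (tendsto_const_nhds.div hIt (ne_of_gt (hCpos t)))
      filter_upwards [hev] with d hd
      simp [Pi.div_apply, hd]
    · -- L → 0
      have hub : ∀ᶠ t : ℕ in atTop,
          c t / C t ≤ (Real.exp 2 * 2^α) * (1+(t:ℝ))^(-α⁻¹) := by
        filter_upwards [eventually_ge_atTop 1] with t ht1
        have h1tn : (1:ℝ) ≤ (t:ℝ) := by exact_mod_cast ht1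
        have hx : 1/(1+(t:ℝ)) ≤ 1/2 := by
          rw [div_le_div_iff₀ (by linarith) two_pos]; linarith
        have hxe := expLB (x := 1/(1+(t:ℝ))) (s := (t:ℝ)) (by positivity) hx (Nat.cast_nonneg t)
        have harg : Real.exp (-2) ≤ Real.exp (-(2*(t:ℝ)*(1/(1+(t:ℝ))))) := by
          apply Real.exp_le_exp.mpr
          rw [neg_le_neg_iff, show 2*(t:ℝ)*(1/(1+(t:ℝ))) = 2*(t:ℝ)/(1+(t:ℝ)) by ring,
            div_le_iff₀ (by linarith)]
          linarith
        have hpow_lb : Real.exp (-2) ≤ (1 - 1/(1+(t:ℝ))) ^ (t:ℝ) := le_trans harg hxe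
        have hBlb : a t * ((2 * a t)^(-α) * Real.exp (-2)) ≤ C t := by
          refine le_trans ?_ (hBle t)
          have h1 : 0 < a t := lt_of_lt_of_le one_pos (ha1 t)
          have h2 : (0:ℝ) ≤ (2 * a t)^(-α) := Real.rpow_nonneg (by linarith) _
          exact mul_le_mul_of_nonneg_left (mul_le_mul_of_nonneg_left hpow_lb h2) h1.le
        have hBlb_pos : 0 < a t * ((2 * a t)^(-α) * Real.exp (-2)) := by
          have h1 : 0 < a t := lt_of_lt_of_le one_pos (ha1 t)
          have h2 : (0:ℝ) < (2 * a t)^(-α) := Real.rpow_pos_of_pos (by linarith) _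
          positivity
        have hcub : c t ≤ 1/(1+(t:ℝ)) := by
          rw [hc]
          have h2 : (1 - 1/(1+(t:ℝ))) ^ (t:ℝ) ≤ 1 :=
            Real.rpow_le_one (hbase_nn t) (by
              have : (0:ℝ) ≤ 1/(1+(t:ℝ)) := by positivity
              linarith) (Nat.cast_nonneg t)
          have h3 : (0:ℝ) ≤ 1/(1+(t:ℝ)) := by positivity
          nlinarith [Real.rpow_nonneg (hbase_nn t) (t:ℝ)]
        have step : c t / C t ≤ (1/(1+(t:ℝ))) / (a t * ((2 * a t)^(-α) * Real.exp (-2))) :=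
          div_le_div₀ (by positivity) hcub hBlb_pos hBlb
        refine le_trans step (le_of_eq ?_)
        have h2a : (2 * a t)^(-α) = 2^(-α) * (1/(1+(t:ℝ))) := by
          rw [Real.mul_rpow (by norm_num : (0:ℝ) ≤ 2) (by linarith [ha1 t] : (0:ℝ) ≤ a t), hat t]
        have haeq : a t = (1+(t:ℝ))^(α⁻¹) := by simp only [hadef]
        rw [h2a, Real.rpow_neg (by norm_num : (0:ℝ) ≤ 2), Real.exp_neg,
          Real.rpow_neg (by linarith [h1t t] : (0:ℝ) ≤ 1+(t:ℝ)), haeq]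
        have h1 : (0:ℝ) < a t := lt_of_lt_of_le one_pos (ha1 t)
        have h2 : (0:ℝ) < (2:ℝ)^α := Real.rpow_pos_of_pos two_pos _
        have h3 : (0:ℝ) < 1+(t:ℝ) := by linarith [h1t t]
        have h4 : (0:ℝ) < Real.exp 2 := Real.exp_pos _
        field_simp
      have hT : Tendsto (fun t : ℕ => (Real.exp 2 * 2^α) * (1+(t:ℝ))^(-α⁻¹)) atTop (nhds 0) := by
        have h5 : Tendsto (fun t : ℕ => (1+(t:ℝ))) atTop atTop :=
          tendsto_atTop_add_const_left atTop 1 tendsto_natCast_atTop_atTop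
        have := ((tendsto_rpow_neg_atTop (by positivity : (0:ℝ) < α⁻¹)).comp h5).const_mul
          (Real.exp 2 * 2^α)
        simpa using this
      refine tendsto_of_tendsto_of_tendsto_of_le_of_le' tendsto_const_nhds hT
        (Eventually.of_forall fun t => div_nonneg (hcnn t) (hCpos t).le) hub
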